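/- Let f = z_{j_1}⋯z_{j_t} be a monomial of degree t ≤ r with m ∉ {j_1,…,j_t}, I = {j_1,…,j_t} ∩ [q−1], and f_y = (z_1⋯z_{q−1}+1)(z_m+1). Then wt(Eval(f_y + f)) − wt(Eval(f_y)) = 2^{m−t−(q−1−|I|)} ≥ 2^{m−r−q+1}. -/
import Mathlib
open Finset

lemma split_card {α : Type*} [Fintype α] (p q : α → Prop) [DecidablePred p] [DecidablePred q] :
    (univ.filter fun z => p z ∧ q z).card + (univ.filter fun z => p z ∧ ¬ q z).card
      = (univ.filter p).card := by
  rw [← filter_filter, ← filter_filter]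
  exact Finset.card_filter_add_card_filter_not q

lemma filter_card_congr {α : Type*} [Fintype α] {p q : α → Prop} [DecidablePred p]
    [DecidablePred q] (h : ∀ z, p z ↔ q z) :
    (univ.filter p).card = (univ.filter q).card := by
  congr 1
  apply Finset.filter_congr
  intro x _
  simp [h x]

lemma prod_eq_one_iff' {m : ℕ} (s : Finset (Fin m)) (z : Fin m → ZMod 2) :
    (∏ i ∈ s, z i) = 1 ↔ ∀ i ∈ s, z i = 1 := by
  constructor
  · intro h i hi
    by_contra hne
    have h0 : z i = 0 := by
      have : ∀ a : ZMod 2, a ≠ 1 → a = 0 := by decide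
      exact this _ hne
    have := Finset.prod_eq_zero hi h0
    rw [h] at this
    exact one_ne_zero this
  · exact Finset.prod_eq_one

lemma count_forced {m : ℕ} (A : Finset (Fin m)) (b : Fin m → ZMod 2) :
    (Finset.univ.filter (fun z : Fin m → ZMod 2 => ∀ i ∈ A, z i = b i)).card
      = 2 ^ (m - A.card) := by
  rw [← Fintype.card_subtype]
  have e : {z : Fin m → ZMod 2 // ∀ i ∈ A, z i = b i} ≃ ({i : Fin m // i ∉ A} → ZMod 2) :=
    { toFun := fun z i => z.1 i.1
      invFun := fun g => ⟨fun i => if h : i ∈ A then b i else g ⟨i, h⟩,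
        fun i hi => dif_pos hi⟩
      left_inv := by
        intro z
        ext i
        by_cases h : i ∈ A
        · simp [h, z.2 i h]
        · simp [h]
      right_inv := by
        intro g
        funext i
        simp [i.2] }
  rw [Fintype.card_congr e, Fintype.card_fun]
  have h1 : Fintype.card {i : Fin m // i ∉ A} = m - A.card := by
    rw [Fintype.card_subtype_compl]
    simp
  rw [h1]
  norm_num

lemma card_filter_lt {m k : ℕ} (h : k ≤ m) :
    (univ.filter (fun i : Fin m => (i : ℕ) < k)).card = k := by
  have : univ.filter (fun i : Fin m => (i : ℕ) < k)
      = Finset.map (Fin.castLEEmb h) univ := by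
    ext x
    simp only [mem_filter, mem_univ, true_and, Finset.mem_map]
    constructor
    · intro hx
      exact ⟨⟨x, hx⟩, by simp [Fin.castLEEmb, Fin.ext_iff]⟩
    · rintro ⟨a, rfl⟩
      simpa [Fin.castLEEmb] using a.isLt
  rw [this]
  simp



/-- Let f = z_{j_1}⋯z_{j_t} be a monomial of degree t ≤ r (variable set J)
not containing z_m, I = J ∩ [q−1], and f_y = (z_1⋯z_{q−1}+1)(z_m+1). Then
wt(Eval(f_y + f)) − wt(Eval(f_y)) = 2^{m−t−(q−1−|I|)} ≥ 2^{m−r−q+1}. -/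
theorem weight_increase_monomial_without_last_variable
    (m q r : ℕ) (hq : 2 ≤ q) (hm : q ≤ m) (hr : r ≤ m - 1)
    (J : Finset (Fin m)) (hJ : (⟨m - 1, by omega⟩ : Fin m) ∉ J)
    (ht1 : 1 ≤ J.card) (htr : J.card ≤ r) :
    (Finset.univ.filter (fun z : Fin m → ZMod 2 =>
        ((∏ i ∈ Finset.univ.filter (fun i : Fin m => (i : ℕ) < q - 1), z i) + 1) *
          (z ⟨m - 1, by omega⟩ + 1) = 1)).card
      ≤ (Finset.univ.filter (fun z : Fin m → ZMod 2 =>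
        ((∏ i ∈ Finset.univ.filter (fun i : Fin m => (i : ℕ) < q - 1), z i) + 1) *
          (z ⟨m - 1, by omega⟩ + 1) + (∏ j ∈ J, z j) = 1)).card ∧
    (Finset.univ.filter (fun z : Fin m → ZMod 2 =>
        ((∏ i ∈ Finset.univ.filter (fun i : Fin m => (i : ℕ) < q - 1), z i) + 1) *
          (z ⟨m - 1, by omega⟩ + 1) + (∏ j ∈ J, z j) = 1)).card
      - (Finset.univ.filter (fun z : Fin m → ZMod 2 =>
        ((∏ i ∈ Finset.univ.filter (fun i : Fin m => (i : ℕ) < q - 1), z i) + 1) *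
          (z ⟨m - 1, by omega⟩ + 1) = 1)).card
      = 2 ^ (m - J.card - (q - 1 - (J.filter (fun j : Fin m => (j : ℕ) < q - 1)).card)) ∧
    2 ^ (m - r - (q - 1))
      ≤ 2 ^ (m - J.card - (q - 1 - (J.filter (fun j : Fin m => (j : ℕ) < q - 1)).card)) := by
  have hm2 : 2 ≤ m := le_trans hq hm
  set M : Fin m := ⟨m - 1, by omega⟩ with hM
  set Pset : Finset (Fin m) := univ.filter (fun i : Fin m => (i : ℕ) < q - 1) with hPset
  set t := J.card with ht
  set s := (J.filter (fun j : Fin m => (j : ℕ) < q - 1)).card with hs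
  clear_value t s
  -- basic membership facts
  have hMP : M ∉ Pset := by
    simp only [hPset, mem_filter, mem_univ, true_and, hM]
    omega
  have hMJ : M ∉ J := hJ
  have hPcard : Pset.card = q - 1 := card_filter_lt (by omega)
  have hJP : J ∩ Pset = J.filter (fun j : Fin m => (j : ℕ) < q - 1) := by
    ext x
    simp [hPset, Finset.mem_filter, and_comm]
  have hsle : s ≤ q - 1 := by
    rw [hs, ← hJP]
    calc (J ∩ Pset).card ≤ Pset.card := card_le_card inter_subset_right
    _ = q - 1 := hPcard
  have hunion : (J ∪ Pset).card + s = t + (q - 1) := by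
    rw [hs, ← hJP, ht, ← hPcard]
    exact Finset.card_union_add_card_inter J Pset
  have hMJP : M ∉ J ∪ Pset := by
    simp [hMJ, hMP]
  set u := (insert M (J ∪ Pset)).card with hu
  have hu1 : u = t + 1 + ((q - 1) - s) := by
    rw [hu, card_insert_of_notMem hMJP]
    omega
  have hu2 : u ≤ m := by
    rw [hu]
    calc (insert M (J ∪ Pset)).card ≤ (univ : Finset (Fin m)).card := card_le_univ _
    _ = m := by simp
  clear_value u
  have htm : t + 1 ≤ m := by omega
  -- predicates
  set p1 : (Fin m → ZMod 2) → Prop := fun z => z M = 0 with hp1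
  set pP : (Fin m → ZMod 2) → Prop := fun z => ∀ i ∈ Pset, z i = 1 with hpP
  set pJ : (Fin m → ZMod 2) → Prop := fun z => ∀ j ∈ J, z j = 1 with hpJ
  set b0 : Fin m → ZMod 2 := fun i => if i = M then 0 else 1 with hb0
  -- count: card filter p1 = 2^(m-1)
  have h_a : (univ.filter p1).card = 2 ^ (m - 1) := by
    have h := count_forced {M} (fun _ => (0 : ZMod 2))
    rw [filter_card_congr (q := fun z : Fin m → ZMod 2 => ∀ i ∈ ({M} : Finset (Fin m)), z i = 0)
      (by intro z; simp [hp1])]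
    simpa using h
  have h_b : (univ.filter (fun z => p1 z ∧ pP z)).card = 2 ^ (m - q) := by
    have h := count_forced (insert M Pset) b0
    rw [filter_card_congr (q := fun z : Fin m → ZMod 2 => ∀ i ∈ insert M Pset, z i = b0 i)
      (by
        intro z
        show p1 z ∧ pP z ↔ ∀ i ∈ insert M Pset, z i = b0 i
        rw [Finset.forall_mem_insert]
        simp only [hp1, hpP, hb0, if_pos rfl]
        apply and_congr Iff.rfl
        apply forall₂_congr
        intro i hi
        rw [if_neg (by rintro rfl; exact hMP hi)])]
    have hexp : m - (q - 1 + 1) = m - q := by clear * - hq hm; omega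
    rw [h, card_insert_of_notMem hMP, hPcard, hexp]
  have h_c : (univ.filter pJ).card = 2 ^ (m - t) := by
    have h := count_forced J (fun _ => (1 : ZMod 2))
    rw [filter_card_congr (q := fun z : Fin m → ZMod 2 => ∀ i ∈ J, z i = 1)
      (by intro z; simp [hpJ])]
    simpa [← ht] using h
  have h_d : (univ.filter (fun z => p1 z ∧ pJ z)).card = 2 ^ (m - t - 1) := by
    have h := count_forced (insert M J) b0
    rw [filter_card_congr (q := fun z : Fin m → ZMod 2 => ∀ i ∈ insert M J, z i = b0 i)
      (by
        intro z
        show p1 z ∧ pJ z ↔ ∀ i ∈ insert M J, z i = b0 i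
        rw [Finset.forall_mem_insert]
        simp only [hp1, hpJ, hb0, if_pos rfl]
        apply and_congr Iff.rfl
        apply forall₂_congr
        intro i hi
        rw [if_neg (by rintro rfl; exact hMJ hi)])]
    have hexp : m - (#J + 1) = m - t - 1 := by rw [← ht]; clear * - htm; omega
    rw [h, card_insert_of_notMem hMJ, hexp]
  have h_e : (univ.filter (fun z => (p1 z ∧ pJ z) ∧ pP z)).card = 2 ^ (m - u) := by
    have h := count_forced (insert M (J ∪ Pset)) b0
    rw [filter_card_congr (q := fun z : Fin m → ZMod 2 => ∀ i ∈ insert M (J ∪ Pset), z i = b0 i)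
      (by
        intro z
        show (p1 z ∧ pJ z) ∧ pP z ↔ ∀ i ∈ insert M (J ∪ Pset), z i = b0 i
        rw [Finset.forall_mem_insert, Finset.forall_mem_union]
        simp only [hp1, hpJ, hpP, hb0, if_pos rfl]
        constructor
        · rintro ⟨⟨h1, h2⟩, h3⟩
          refine ⟨h1, fun i hi => ?_, fun i hi => ?_⟩
          · rw [h2 i hi, if_neg (by rintro rfl; exact hMJ hi)]
          · rw [h3 i hi, if_neg (by rintro rfl; exact hMP hi)]
        · rintro ⟨h1, h2, h3⟩
          refine ⟨⟨h1, fun i hi => ?_⟩, fun i hi => ?_⟩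
          · rw [h2 i hi, if_neg (by rintro rfl; exact hMJ hi)]
          · rw [h3 i hi, if_neg (by rintro rfl; exact hMP hi)])]
    rw [h, ← hu]
  -- splits
  have split1 := split_card p1 pP
  have split2 := split_card (fun z => p1 z ∧ pJ z) pP
  have split3 := split_card pJ (fun z => p1 z ∧ ¬ pP z)
  have split4 := split_card (fun z => p1 z ∧ ¬ pP z) pJ
  set N1 := (univ.filter (fun z => p1 z ∧ ¬ pP z)).card with hN1
  set K := (univ.filter (fun z => (p1 z ∧ pJ z) ∧ ¬ pP z)).card with hK
  -- identifications of K
  have hK1 : (univ.filter (fun z => pJ z ∧ (p1 z ∧ ¬ pP z))).card = K := by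
    rw [hK]; exact filter_card_congr (by intro z; tauto)
  have hK2 : (univ.filter (fun z => (p1 z ∧ ¬ pP z) ∧ pJ z)).card = K := by
    rw [hK]; exact filter_card_congr (by intro z; tauto)
  rw [h_a, h_b] at split1
  rw [h_d, h_e] at split2
  rw [h_c, hK1] at split3
  rw [hK2] at split4
  -- pointwise keys
  have key0 : ∀ x y : ZMod 2, ((x + 1) * (y + 1) = 1) ↔ (y = 0 ∧ ¬ x = 1) := by decide
  have key1 : ∀ x y w : ZMod 2,
      ((x + 1) * (y + 1) + w = 1 ∧ w = 1) ↔ (w = 1 ∧ ¬ (y = 0 ∧ ¬ x = 1)) := by decide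
  have key2 : ∀ x y w : ZMod 2,
      ((x + 1) * (y + 1) + w = 1 ∧ ¬ w = 1) ↔ ((y = 0 ∧ ¬ x = 1) ∧ ¬ w = 1) := by decide
  -- identify the theorem's sets
  set c2 : (Fin m → ZMod 2) → Prop := fun z =>
    ((∏ i ∈ Pset, z i) + 1) * (z M + 1) + (∏ j ∈ J, z j) = 1 with hc2
  have split5 := split_card c2 pJ
  have heqA : (univ.filter (fun z => c2 z ∧ pJ z)).card
      = (univ.filter (fun z => pJ z ∧ ¬ (p1 z ∧ ¬ pP z))).card := by
    apply filter_card_congr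
    intro z
    have hF := prod_eq_one_iff' J z
    have hP := prod_eq_one_iff' Pset z
    simp only [hc2, hpJ, hp1, hpP, ← hF, ← hP]
    exact key1 _ _ _
  have heqB : (univ.filter (fun z => c2 z ∧ ¬ pJ z)).card
      = (univ.filter (fun z => (p1 z ∧ ¬ pP z) ∧ ¬ pJ z)).card := by
    apply filter_card_congr
    intro z
    have hF := prod_eq_one_iff' J z
    have hP := prod_eq_one_iff' Pset z
    simp only [hc2, hpJ, hp1, hpP, ← hF, ← hP]
    exact key2 _ _ _
  have heqC : (univ.filter (fun z : Fin m → ZMod 2 =>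
      ((∏ i ∈ Pset, z i) + 1) * (z M + 1) = 1)).card = N1 := by
    rw [hN1]
    apply filter_card_congr
    intro z
    have hP := prod_eq_one_iff' Pset z
    simp only [hp1, hpP, ← hP]
    exact key0 _ _
  rw [heqA, heqB] at split5
  set A1 := (univ.filter (fun z => pJ z ∧ ¬ (p1 z ∧ ¬ pP z))).card with hA1
  set A2 := (univ.filter (fun z => (p1 z ∧ ¬ pP z) ∧ ¬ pJ z)).card with hA2
  set N2 := (univ.filter c2).card with hN2'
  clear_value N1 K A1 A2 N2
  -- arithmetic
  have hpow1 : 2 ^ (m - t) = 2 ^ (m - t - 1) + 2 ^ (m - t - 1) := by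
    have h1 : m - t - 1 + 1 = m - t := by clear * - htm; omega
    calc 2 ^ (m - t) = 2 ^ (m - t - 1 + 1) := by rw [h1]
    _ = 2 ^ (m - t - 1) + 2 ^ (m - t - 1) := by rw [pow_succ, mul_two]
  have hE : m - u + 1 = m - t - (q - 1 - s) := by clear * - hu1 hu2 htm hsle; omega
  have hpow2 : 2 ^ (m - t - (q - 1 - s)) = 2 ^ (m - u) + 2 ^ (m - u) := by
    calc 2 ^ (m - t - (q - 1 - s)) = 2 ^ (m - u + 1) := by rw [hE]
    _ = 2 ^ (m - u) + 2 ^ (m - u) := by rw [pow_succ, mul_two]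
  have hN2 : N2 = N1 + 2 ^ (m - t - (q - 1 - s)) := by
    clear * - split1 split2 split3 split4 split5 hpow1 hpow2
    omega
  refine ⟨?_, ?_, ?_⟩
  · rw [heqC]
    calc N1 ≤ N1 + 2 ^ (m - t - (q - 1 - s)) := Nat.le_add_right _ _
    _ = N2 := hN2.symm
  · rw [heqC, hN2, Nat.add_sub_cancel_left]
  · apply Nat.pow_le_pow_right (by norm_num)
    clear * - htr hsle
    omega
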